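/- Let k be an algebraically closed field, V a 3-dimensional k-vector space, and ζ ∈ GL(V). Let C(ζ) = {φ ∈ GL(V) : φζ = ζφ} be the centralizer of ζ in GL(V) and G(ζ) = {φ ∈ GL(V) : φζφ⁻¹ = c·ζ for some c ∈ k, c ≠ 0} (a subgroup of GL(V) containing C(ζ)). Then either G(ζ) = C(ζ), or C(ζ) is a subgroup of index 3 in G(ζ). In the latter case char k ≠ 3 and ζ has three distinct eigenvalues α₁, α₂, α₃ satisfying α₁α₂⁻¹ = α₂α₃⁻¹ = α₃α₁⁻¹ = ε, where ε is a primitive cube root of unity in k. -/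

import Mathlib

noncomputable section

theorem stmt19 (k V : Type) [Field k] [IsAlgClosed k] [AddCommGroup V] [Module k V]
    (hdim : Module.finrank k V = 3) (ζ : V ≃ₗ[k] V)
    -- `C` is the centralizer of `ζ` in `GL(V)` (the automorphism group of `V`)
    (C : Subgroup (V ≃ₗ[k] V))
    (hC : ∀ φ : V ≃ₗ[k] V, φ ∈ C ↔ ∀ v : V, φ (ζ v) = ζ (φ v))
    -- `G` consists of those `φ` with `φζφ⁻¹ = c·ζ` for some nonzero scalar `c`
    (G : Subgroup (V ≃ₗ[k] V))
    (hG : ∀ φ : V ≃ₗ[k] V, φ ∈ G ↔ ∃ c : k, c ≠ 0 ∧ ∀ v : V, φ (ζ v) = c • ζ (φ v)) :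
    G = C ∨
      (C.relIndex G = 3 ∧ ringChar k ≠ 3 ∧
        ∃ α₁ α₂ α₃ : k, α₁ ≠ α₂ ∧ α₂ ≠ α₃ ∧ α₁ ≠ α₃ ∧
          Module.End.HasEigenvalue (ζ.toLinearMap : Module.End k V) α₁ ∧
          Module.End.HasEigenvalue (ζ.toLinearMap : Module.End k V) α₂ ∧
          Module.End.HasEigenvalue (ζ.toLinearMap : Module.End k V) α₃ ∧
          ∃ ε : k, IsPrimitiveRoot ε 3 ∧
            α₁ * α₂⁻¹ = ε ∧ α₂ * α₃⁻¹ = ε ∧ α₃ * α₁⁻¹ = ε) := by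
  classical
  have hpos : 0 < Module.finrank k V := by rw [hdim]; norm_num
  have hfd : FiniteDimensional k V := FiniteDimensional.of_finrank_pos hpos
  have hnt : Nontrivial V := Module.nontrivial_of_finrank_pos hpos
  obtain ⟨v₀, hv₀⟩ := exists_ne (0 : V)
  -- uniqueness of the scalar
  have huniq : ∀ (φ : V ≃ₗ[k] V) (c c' : k), (∀ v, φ (ζ v) = c • ζ (φ v)) →
      (∀ v, φ (ζ v) = c' • ζ (φ v)) → c = c' := by
    intro φ c c' h h'
    have hw : ζ (φ v₀) ≠ 0 := by
      simp [ζ.map_eq_zero_iff, φ.map_eq_zero_iff, hv₀]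
    have heq : c • ζ (φ v₀) = c' • ζ (φ v₀) := (h v₀).symm.trans (h' v₀)
    have h0 : (c - c') • ζ (φ v₀) = 0 := by rw [sub_smul, heq, sub_self]
    rcases smul_eq_zero.mp h0 with h1 | h1
    · exact sub_eq_zero.mp h1
    · exact absurd h1 hw
  -- the scalar is a cube root of unity
  have hcube : ∀ (φ : V ≃ₗ[k] V) (c : k), (∀ v, φ (ζ v) = c • ζ (φ v)) → c ^ 3 = 1 := by
    intro φ c h
    have hcomp : (φ.toLinearMap ∘ₗ ζ.toLinearMap) = ((c • ζ.toLinearMap) ∘ₗ φ.toLinearMap) := by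
      ext v; simpa using h v
    have hd := congrArg LinearMap.det hcomp
    rw [LinearMap.det_comp, LinearMap.det_comp, LinearMap.det_smul, hdim] at hd
    have hφ : LinearMap.det φ.toLinearMap ≠ 0 := (LinearEquiv.isUnit_det' φ).ne_zero
    have hζ : LinearMap.det ζ.toLinearMap ≠ 0 := (LinearEquiv.isUnit_det' ζ).ne_zero
    have hz : (c ^ 3 - 1) * (LinearMap.det ζ.toLinearMap * LinearMap.det φ.toLinearMap) = 0 := by
      linear_combination -hd
    rcases mul_eq_zero.mp hz with h1 | h1
    · exact sub_eq_zero.mp h1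
    · rcases mul_eq_zero.mp h1 with h2 | h2
      · exact absurd h2 hζ
      · exact absurd h2 hφ
  by_cases hGC : ∀ φ, φ ∈ G → φ ∈ C
  · left
    refine le_antisymm hGC ?_
    intro φ hφ
    rw [hG]
    exact ⟨1, one_ne_zero, fun v => by rw [(hC φ).1 hφ v, one_smul]⟩
  · right
    push_neg at hGC
    obtain ⟨φ₀, hφ₀G, hφ₀C⟩ := hGC
    obtain ⟨c, hc0, hcφ⟩ := (hG φ₀).1 hφ₀G
    have hc1 : c ≠ 1 := by
      intro h
      exact hφ₀C ((hC φ₀).mpr (fun v => by simpa [h] using hcφ v))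
    have hc3 : c ^ 3 = 1 := hcube φ₀ c hcφ
    have hsum : c ^ 2 + c + 1 = 0 := by
      have h1 : (c - 1) * (c ^ 2 + c + 1) = 0 := by linear_combination hc3
      rcases mul_eq_zero.mp h1 with h2 | h2
      · exact absurd (sub_eq_zero.mp h2) hc1
      · exact h2
    -- ε and its properties
    set ε : k := c⁻¹ with hεdef
    have hε0 : ε ≠ 0 := inv_ne_zero hc0
    have hε3 : ε ^ 3 = 1 := by rw [hεdef, inv_pow, hc3, inv_one]
    have hε1 : ε ≠ 1 := by
      rw [hεdef, Ne, inv_eq_one]; exact hc1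
    haveI : Fact (Nat.Prime 3) := ⟨by norm_num⟩
    have hord : orderOf ε = 3 := orderOf_eq_prime hε3 hε1
    have hprim : IsPrimitiveRoot ε 3 := hord ▸ IsPrimitiveRoot.orderOf ε
    have hchar : ringChar k ≠ 3 := by
      intro h
      have h3 : (3 : k) = 0 := by
        have := ringChar.Nat.cast_ringChar (R := k)
        rw [h] at this; exact_mod_cast this
      have hz : (ε - 1) ^ 3 = 0 := by linear_combination hε3 + (ε - ε ^ 2) * h3
      exact hε1 (sub_eq_zero.mp (pow_eq_zero_iff (by norm_num : 3 ≠ 0) |>.mp hz))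
    -- eigenvalue shifting
    have hshift : ∀ μ : k, Module.End.HasEigenvalue (ζ.toLinearMap : Module.End k V) μ →
        Module.End.HasEigenvalue (ζ.toLinearMap : Module.End k V) (ε * μ) := by
      intro μ hμ
      obtain ⟨v, hv⟩ := hμ.exists_hasEigenvector
      have hv' : ζ v = μ • v := Module.End.mem_eigenspace_iff.mp hv.1
      have hw0 : φ₀ v ≠ 0 := by simp [φ₀.map_eq_zero_iff, hv.2]
      refine Module.End.hasEigenvalue_of_hasEigenvector (x := φ₀ v)
        ⟨Module.End.mem_eigenspace_iff.mpr ?_, hw0⟩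
      have h1 := hcφ v
      rw [hv', map_smul] at h1
      -- h1 : μ • φ₀ v = c • ζ (φ₀ v)
      have h2 : ζ (φ₀ v) = c⁻¹ • μ • φ₀ v := by
        rw [h1, inv_smul_smul₀ hc0]
      show ζ (φ₀ v) = (ε * μ) • φ₀ v
      rw [h2, hεdef, smul_smul]
    obtain ⟨α, hα⟩ := Module.End.exists_eigenvalue (ζ.toLinearMap : Module.End k V)
    have hα0 : α ≠ 0 := by
      intro h
      obtain ⟨v, hv⟩ := hα.exists_hasEigenvector
      have hv' : ζ v = α • v := Module.End.mem_eigenspace_iff.mp hv.1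
      rw [h, zero_smul] at hv'
      exact hv.2 (ζ.map_eq_zero_iff.mp hv')
    have hεα : ε * α ≠ 0 := mul_ne_zero hε0 hα0
    have hε2 : ε ^ 2 ≠ 1 := fun h => hε1 (by linear_combination hε3 - ε * h)
    refine ⟨?_, hchar, ε * (ε * α), ε * α, α, ?_, ?_, ?_,
      hshift _ (hshift _ hα), hshift _ hα, hα, ε, hprim, ?_, ?_, ?_⟩
    · -- the index computation
      choose sc hsc0 hscspec using fun φ : G => (hG φ).1 φ.2
      have hscu : ∀ (φ : G) (d : k),
          (∀ v, (φ : V ≃ₗ[k] V) (ζ v) = d • ζ ((φ : V ≃ₗ[k] V) v)) → sc φ = d :=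
        fun φ d h => huniq _ _ _ (hscspec φ) h
      have hmulapply : ∀ (a b : V ≃ₗ[k] V) (v : V), (a * b) v = a (b v) := fun _ _ _ => rfl
      set f : G →* kˣ :=
        { toFun := fun φ => Units.mk0 (sc φ) (hsc0 φ)
          map_one' := by
            exact Units.ext (hscu 1 1 (by intro v; simp))
          map_mul' := by
            intro φ ψ
            ext
            simp only [Units.val_mk0, Units.val_mul]
            apply hscu
            intro v
            have h2 := hscspec ψ v
            have h1 := hscspec φ (((ψ : V ≃ₗ[k] V)) v)
            calc ((φ * ψ : G) : V ≃ₗ[k] V) (ζ v)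
                = (φ : V ≃ₗ[k] V) ((ψ : V ≃ₗ[k] V) (ζ v)) := rfl
              _ = (φ : V ≃ₗ[k] V) (sc ψ • ζ ((ψ : V ≃ₗ[k] V) v)) := by rw [h2]
              _ = sc ψ • (φ : V ≃ₗ[k] V) (ζ ((ψ : V ≃ₗ[k] V) v)) := by rw [map_smul]
              _ = sc ψ • sc φ • ζ ((φ : V ≃ₗ[k] V) ((ψ : V ≃ₗ[k] V) v)) := by rw [h1]
              _ = (sc φ * sc ψ) • ζ (((φ * ψ : G) : V ≃ₗ[k] V) v) := by
                  rw [smul_smul, mul_comm]; rfl } with hfdef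
      have hker : C.subgroupOf G = f.ker := by
        ext φ
        simp only [Subgroup.mem_subgroupOf, MonoidHom.mem_ker]
        constructor
        · intro hφ
          exact Units.ext (hscu φ 1 (fun v => by rw [(hC _).1 hφ v, one_smul]))
        · intro hφ
          rw [hC]
          intro v
          have hs : sc φ = 1 := congrArg Units.val hφ
          have := hscspec φ v
          rw [hs, one_smul] at this
          exact this
      have hrel : C.relIndex G = (C.subgroupOf G).index := rfl
      rw [hrel, hker, Subgroup.index_ker f]
      -- the image is the group of cube roots of unity, generated by c
      set cu : kˣ := f ⟨φ₀, hφ₀G⟩ with hcudef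
      have hcuval : (cu : k) = c := hscu ⟨φ₀, hφ₀G⟩ c hcφ
      have hcu3 : cu ^ 3 = 1 := by
        ext; push_cast [hcuval]; exact hc3
      have hcune : cu ≠ 1 := by
        intro h
        apply hc1
        rw [← hcuval, h, Units.val_one]
      have hrange : f.range = Subgroup.zpowers cu := by
        apply le_antisymm
        · rintro x ⟨ψ, rfl⟩
          have hx3 : ((f ψ : kˣ) : k) ^ 3 = 1 := by
            exact hcube _ _ (hscspec ψ)
          set y : k := ((f ψ : kˣ) : k) with hydef
          have hfac : (y - 1) * ((y - c) * (y - c ^ 2)) = 0 := by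
            linear_combination hx3 + (y - y ^ 2) * hsum + (y - 1) * hc3
          rcases mul_eq_zero.mp hfac with h1 | h1
          · have : f ψ = 1 := Units.ext (sub_eq_zero.mp h1)
            rw [this]; exact Subgroup.one_mem _
          · rcases mul_eq_zero.mp h1 with h2 | h2
            · have : f ψ = cu := by
                ext; rw [hcuval]; exact sub_eq_zero.mp h2
              rw [this]; exact Subgroup.mem_zpowers cu
            · have : f ψ = cu ^ 2 := by
                ext; push_cast [hcuval]; exact sub_eq_zero.mp h2
              rw [this]; exact pow_mem (Subgroup.mem_zpowers cu) 2
        · rw [Subgroup.zpowers_le]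
          exact ⟨⟨φ₀, hφ₀G⟩, rfl⟩
      rw [hrange, Nat.card_zpowers]
      exact orderOf_eq_prime hcu3 hcune
    · -- α₁ ≠ α₂
      intro h
      have hz : (ε - 1) * (ε * α) = 0 := by linear_combination h
      rcases mul_eq_zero.mp hz with h1 | h1
      · exact hε1 (sub_eq_zero.mp h1)
      · exact hεα h1
    · -- α₂ ≠ α₃
      intro h
      have hz : (ε - 1) * α = 0 := by linear_combination h
      rcases mul_eq_zero.mp hz with h1 | h1
      · exact hε1 (sub_eq_zero.mp h1)
      · exact hα0 h1
    · -- α₁ ≠ α₃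
      intro h
      have hz : (ε ^ 2 - 1) * α = 0 := by linear_combination h
      rcases mul_eq_zero.mp hz with h1 | h1
      · exact hε2 (sub_eq_zero.mp h1)
      · exact hα0 h1
    · field_simp
    · field_simp
    · rw [← div_eq_mul_inv, div_eq_iff (mul_ne_zero hε0 hεα)]
      linear_combination -α * hε3
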